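/- Let ε be a non-trivial scale (lim_ω ε_n = 0). Then B_ε = {z : ℕ → ℂ | lim_ω |z_n|^{ε_n} < ∞} is a subring of the product ring ℂ^ℕ containing all constant sequences, N_ε = {z : ℕ → ℂ | lim_ω |z_n|^{ε_n} = 0} is a maximal ideal of B_ε, and consequently the quotient ℋ^ε(ω) = B_ε/N_ε is a field. Moreover the function z ↦ lim_ω |z_n|^{ε_n} descends to a well-defined multiplicative norm on ℋ^ε(ω). -/

import Mathlib

open Filter

/-- The ω-limit of a sequence in the compact space `[0,∞]`; for an ultrafilter this
equals the `limsup` along the ultrafilter. -/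
noncomputable def limw (ω : Ultrafilter ℕ) (a : ℕ → ENNReal) : ENNReal :=
  Filter.limsup a (ω : Filter ℕ)

/-- `lim_ω |z_n|^{η_n}` viewed in `[0,∞]`. -/
noncomputable def limNorm (ω : Ultrafilter ℕ) (η : ℕ → ℝ) (z : ℕ → ℂ) : ENNReal :=
  limw ω (fun n => ENNReal.ofReal (‖z n‖ ^ η n))

/-- A scale is a sequence with values in `(0,1]`. -/
def IsScale (η : ℕ → ℝ) : Prop := ∀ n, 0 < η n ∧ η n ≤ 1

/-- `lim_ω η_n / η'_n` in `[0,∞]`. -/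
noncomputable def scaleRatio (ω : Ultrafilter ℕ) (η η' : ℕ → ℝ) : ENNReal :=
  limw ω (fun n => ENNReal.ofReal (η n / η' n))

/-- `η ≤ η'` iff `lim_ω η_n/η'_n < ∞`. -/
def ScaleLE (ω : Ultrafilter ℕ) (η η' : ℕ → ℝ) : Prop := scaleRatio ω η η' ≠ ⊤

/-- `η < η'` iff `lim_ω η_n/η'_n = 0`. -/
def ScaleLT (ω : Ultrafilter ℕ) (η η' : ℕ → ℝ) : Prop := scaleRatio ω η η' = 0

/-- A scale is non-trivial if `lim_ω ε_n = 0`. -/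
def NontrivialScale (ω : Ultrafilter ℕ) (ε : ℕ → ℝ) : Prop :=
  limw ω (fun n => ENNReal.ofReal (ε n)) = 0

/-- Two scales are equivalent if `C⁻¹ η_n ≤ η'_n ≤ C η_n` ω-almost surely for some `C > 1`. -/
def ScaleEquiv (ω : Ultrafilter ℕ) (η η' : ℕ → ℝ) : Prop :=
  ∃ C : ℝ, 1 < C ∧ {n | C⁻¹ * η n ≤ η' n ∧ η' n ≤ C * η n} ∈ ω

open Topology

section Aux

variable (ω : Ultrafilter ℕ) (ε : ℕ → ℝ)

lemma limw_tendsto (a : ℕ → ENNReal) :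
    Tendsto a (ω : Filter ℕ) (𝓝 (limw ω a)) := by
  have h : Tendsto a (ω : Filter ℕ) (𝓝 (Ultrafilter.map a ω).lim) := by
    rw [Tendsto, ← Ultrafilter.coe_map]
    exact (Ultrafilter.map a ω).le_nhds_lim
  have he : limw ω a = (Ultrafilter.map a ω).lim := h.limsup_eq
  rw [he]; exact h

lemma limw_eq {a : ℕ → ENNReal} {x : ENNReal}
    (h : Tendsto a (ω : Filter ℕ) (𝓝 x)) : limw ω a = x :=
  h.limsup_eq

lemma limNorm_tendsto (ε : ℕ → ℝ) (z : ℕ → ℂ) :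
    Tendsto (fun n => ENNReal.ofReal (‖z n‖ ^ ε n)) (ω : Filter ℕ)
      (𝓝 (limNorm ω ε z)) := limw_tendsto ω _

lemma ofReal_abs_rpow (hε : IsScale ε) (z : ℕ → ℂ) (n : ℕ) :
    ENNReal.ofReal (‖z n‖ ^ ε n)
      = ENNReal.ofReal (‖z n‖) ^ ε n :=
  (ENNReal.ofReal_rpow_of_nonneg (norm_nonneg _) (hε n).1.le).symm

lemma limNorm_mul (hε : IsScale ε) (z w : ℕ → ℂ)
    (h1 : limNorm ω ε z ≠ 0 ∨ limNorm ω ε w ≠ ⊤)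
    (h2 : limNorm ω ε w ≠ 0 ∨ limNorm ω ε z ≠ ⊤) :
    limNorm ω ε (z * w) = limNorm ω ε z * limNorm ω ε w := by
  have hmul := ENNReal.Tendsto.mul (limNorm_tendsto ω ε z) h1 (limNorm_tendsto ω ε w) h2
  refine limw_eq ω ?_
  refine hmul.congr fun n => ?_
  rw [Pi.mul_apply, norm_mul, Real.mul_rpow (norm_nonneg _) (norm_nonneg _),
    ENNReal.ofReal_mul (Real.rpow_nonneg (norm_nonneg _) _)]

lemma limNorm_add_le (hε : IsScale ε) (z w : ℕ → ℂ) :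
    limNorm ω ε (z + w) ≤ limNorm ω ε z + limNorm ω ε w := by
  have hadd : Tendsto
      (fun n => ENNReal.ofReal (‖z n‖ ^ ε n)
        + ENNReal.ofReal (‖w n‖ ^ ε n)) (ω : Filter ℕ)
      (𝓝 (limNorm ω ε z + limNorm ω ε w)) :=
    (limNorm_tendsto ω ε z).add (limNorm_tendsto ω ε w)
  have hle : ∀ n, ENNReal.ofReal (‖(z + w) n‖ ^ ε n)
      ≤ ENNReal.ofReal (‖z n‖ ^ ε n)
        + ENNReal.ofReal (‖w n‖ ^ ε n) := by
    intro n
    rw [ofReal_abs_rpow ε hε, ofReal_abs_rpow ε hε, ofReal_abs_rpow ε hε]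
    calc ENNReal.ofReal (‖(z + w) n‖) ^ ε n
        ≤ (ENNReal.ofReal (‖z n‖) + ENNReal.ofReal (‖w n‖)) ^ ε n := by
          refine ENNReal.rpow_le_rpow ?_ (hε n).1.le
          rw [← ENNReal.ofReal_add (norm_nonneg _) (norm_nonneg _)]
          exact ENNReal.ofReal_le_ofReal
            ((norm_add_le _ _ : _))
      _ ≤ ENNReal.ofReal (‖z n‖) ^ ε n
          + ENNReal.ofReal (‖w n‖) ^ ε n :=
          ENNReal.rpow_add_le_add_rpow _ _ (hε n).1.le (hε n).2
  calc limNorm ω ε (z + w)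
      ≤ limw ω (fun n => ENNReal.ofReal (‖z n‖ ^ ε n)
          + ENNReal.ofReal (‖w n‖ ^ ε n)) :=
        limsup_le_limsup (Eventually.of_forall hle)
    _ = limNorm ω ε z + limNorm ω ε w := limw_eq ω hadd

lemma limNorm_neg (z : ℕ → ℂ) : limNorm ω ε (-z) = limNorm ω ε z := by
  unfold limNorm
  congr 1; funext n; rw [Pi.neg_apply, norm_neg]

lemma limNorm_one : limNorm ω ε (1 : ℕ → ℂ) = 1 := by
  have : (fun n => ENNReal.ofReal (‖(1 : ℕ → ℂ) n‖ ^ ε n))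
      = fun _ => (1 : ENNReal) := by
    funext n; simp
  rw [limNorm, this, limw, limsup_const]

lemma limNorm_zero (hε : IsScale ε) : limNorm ω ε (0 : ℕ → ℂ) = 0 := by
  have : (fun n => ENNReal.ofReal (‖(0 : ℕ → ℂ) n‖ ^ ε n))
      = fun _ => (0 : ENNReal) := by
    funext n; simp [Real.zero_rpow (hε n).1.ne']
  rw [limNorm, this, limw, limsup_const]

lemma limNorm_const_ne_top (hε : IsScale ε) (c : ℂ) :
    limNorm ω ε (fun _ => c) ≠ ⊤ := by
  have hb : ∀ n, ENNReal.ofReal (‖c‖ ^ ε n)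
      ≤ ENNReal.ofReal (max (‖c‖) 1) := by
    intro n
    refine ENNReal.ofReal_le_ofReal ?_
    rcases le_total (‖c‖) 1 with h | h
    · exact le_max_of_le_right (Real.rpow_le_one (norm_nonneg _) h (hε n).1.le)
    · refine le_max_of_le_left ?_
      calc ‖c‖ ^ ε n ≤ ‖c‖ ^ (1 : ℝ) :=
            Real.rpow_le_rpow_of_exponent_le h (hε n).2
        _ = ‖c‖ := Real.rpow_one _
  have hle : limNorm ω ε (fun _ => c) ≤ ENNReal.ofReal (max (‖c‖) 1) :=
    limsup_le_of_le (by isBoundedDefault) (Eventually.of_forall hb)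
  exact fun h => (h ▸ hle).not_gt ENNReal.ofReal_lt_top

end Aux


lemma limNorm_of_eventually_zero (ω : Ultrafilter ℕ) (ε : ℕ → ℝ) (hε : IsScale ε)
    (y : ℕ → ℂ) (h : ∀ᶠ n in (ω : Filter ℕ), y n = 0) : limNorm ω ε y = 0 := by
  have h0 : ∀ᶠ n in (ω : Filter ℕ),
      ENNReal.ofReal (‖y n‖ ^ ε n) = (fun _ => (0 : ENNReal)) n := by
    filter_upwards [h] with n hn
    simp [hn, Real.zero_rpow (hε n).1.ne']
  rw [limNorm, limw, limsup_congr h0, limsup_const]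

lemma limNorm_inv (ω : Ultrafilter ℕ) (ε : ℕ → ℝ) (hε : IsScale ε) (z : ℕ → ℂ)
    (hz0 : limNorm ω ε z ≠ 0) :
    limNorm ω ε (fun n => (z n)⁻¹) = (limNorm ω ε z)⁻¹ ∧ {n | z n ≠ 0} ∈ ω := by
  have hS : {n | z n ≠ 0} ∈ ω := by
    by_contra h
    rw [← Ultrafilter.compl_mem_iff_notMem] at h
    apply hz0
    refine limNorm_of_eventually_zero ω ε hε z ?_
    filter_upwards [h] with n hn
    simpa using hn
  refine ⟨?_, hS⟩
  have hinv : Tendsto (fun n => (ENNReal.ofReal (‖z n‖ ^ ε n))⁻¹)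
      (ω : Filter ℕ) (𝓝 (limNorm ω ε z)⁻¹) := (limNorm_tendsto ω ε z).inv
  refine limw_eq ω (hinv.congr' ?_)
  filter_upwards [hS] with n hn
  have habs : 0 < ‖z n‖ := norm_pos_iff.mpr hn
  rw [norm_inv, Real.inv_rpow habs.le,
    ENNReal.ofReal_inv_of_pos (Real.rpow_pos_of_pos habs _)]

noncomputable def Bring (ω : Ultrafilter ℕ) (ε : ℕ → ℝ) (hε : IsScale ε) : Subring (ℕ → ℂ) where
  carrier := {z | limNorm ω ε z ≠ ⊤}
  mul_mem' := by
    intro a b ha hb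
    simp only [Set.mem_setOf_eq] at *
    rw [limNorm_mul ω ε hε a b (Or.inr hb) (Or.inr ha)]
    exact ENNReal.mul_ne_top ha hb
  one_mem' := by simp only [Set.mem_setOf_eq, limNorm_one]; exact ENNReal.one_ne_top
  add_mem' := by
    intro a b ha hb
    simp only [Set.mem_setOf_eq] at *
    exact fun h => (ENNReal.add_ne_top.mpr ⟨ha, hb⟩)
      ((top_le_iff.mp (h ▸ limNorm_add_le ω ε hε a b)))
  zero_mem' := by
    simp only [Set.mem_setOf_eq, limNorm_zero ω ε hε]; exact ENNReal.zero_ne_top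
  neg_mem' := by
    intro a ha
    simp only [Set.mem_setOf_eq, limNorm_neg] at *
    exact ha

lemma mem_Bring (ω : Ultrafilter ℕ) (ε : ℕ → ℝ) (hε : IsScale ε) (z : ℕ → ℂ) :
    z ∈ Bring ω ε hε ↔ limNorm ω ε z ≠ ⊤ := Iff.rfl

noncomputable def Nideal (ω : Ultrafilter ℕ) (ε : ℕ → ℝ) (hε : IsScale ε) :
    Ideal (Bring ω ε hε) where
  carrier := {z | limNorm ω ε (z : ℕ → ℂ) = 0}
  zero_mem' := by
    show limNorm ω ε ((0 : Bring ω ε hε) : ℕ → ℂ) = 0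
    exact limNorm_zero ω ε hε
  add_mem' := by
    intro a b ha hb
    simp only [Set.mem_setOf_eq] at *
    refine le_antisymm ?_ zero_le
    calc limNorm ω ε ((a + b : Bring ω ε hε) : ℕ → ℂ)
        = limNorm ω ε ((a : ℕ → ℂ) + (b : ℕ → ℂ)) := rfl
      _ ≤ limNorm ω ε (a : ℕ → ℂ) + limNorm ω ε (b : ℕ → ℂ) := limNorm_add_le ω ε hε _ _
      _ = 0 := by rw [ha, hb, add_zero]
  smul_mem' := by
    intro c x hx
    simp only [Set.mem_setOf_eq] at *
    show limNorm ω ε ((c * x : Bring ω ε hε) : ℕ → ℂ) = 0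
    have : ((c * x : Bring ω ε hε) : ℕ → ℂ) = (c : ℕ → ℂ) * (x : ℕ → ℂ) := rfl
    rw [this, limNorm_mul ω ε hε _ _ (Or.inr (by rw [hx]; exact ENNReal.zero_ne_top))
      (Or.inr c.2), hx, mul_zero]

lemma mem_Nideal (ω : Ultrafilter ℕ) (ε : ℕ → ℝ) (hε : IsScale ε) (z : Bring ω ε hε) :
    z ∈ Nideal ω ε hε ↔ limNorm ω ε (z : ℕ → ℂ) = 0 := Iff.rfl

lemma isField_quot (ω : Ultrafilter ℕ) (ε : ℕ → ℝ) (hε : IsScale ε) :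
    IsField (Bring ω ε hε ⧸ Nideal ω ε hε) := by
  constructor
  · refine ⟨0, 1, fun h => ?_⟩
    have h1 : (1 : Bring ω ε hε) ∈ Nideal ω ε hε := by
      rw [← Ideal.Quotient.eq_zero_iff_mem, map_one]
      exact h.symm
    rw [mem_Nideal] at h1
    have : limNorm ω ε ((1 : Bring ω ε hε) : ℕ → ℂ) = 1 := limNorm_one ω ε
    rw [h1] at this
    exact zero_ne_one this
  · exact mul_comm
  · intro a ha
    obtain ⟨z, rfl⟩ := Ideal.Quotient.mk_surjective a
    have hz0 : limNorm ω ε (z : ℕ → ℂ) ≠ 0 := by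
      intro h
      exact ha (Ideal.Quotient.eq_zero_iff_mem.mpr ((mem_Nideal ω ε hε z).mpr h))
    obtain ⟨hinv, hS⟩ := limNorm_inv ω ε hε (z : ℕ → ℂ) hz0
    have hwB : (fun n => ((z : ℕ → ℂ) n)⁻¹) ∈ Bring ω ε hε := by
      rw [mem_Bring, hinv]
      exact ENNReal.inv_ne_top.mpr hz0
    refine ⟨Ideal.Quotient.mk _ ⟨_, hwB⟩, ?_⟩
    rw [← map_mul, ← map_one (Ideal.Quotient.mk (Nideal ω ε hε)), Ideal.Quotient.mk_eq_mk_iff_sub_mem]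
    rw [mem_Nideal]
    refine limNorm_of_eventually_zero ω ε hε _ ?_
    filter_upwards [hS] with n hn
    show (z : ℕ → ℂ) n * ((z : ℕ → ℂ) n)⁻¹ - 1 = 0
    rw [mul_inv_cancel₀ hn, sub_self]


/-- STATEMENT 9: `B_ε` is a subring of `ℂ^ℕ` containing the constant sequences, `N_ε` is a
maximal ideal of `B_ε` (so the quotient `ℋ^ε(ω) = B_ε/N_ε` is a field), and
`z ↦ lim_ω |z_n|^{ε_n}` descends to a well-defined multiplicative norm on `ℋ^ε(ω)`. -/
theorem stmt9 (ω : Ultrafilter ℕ) (hω : ∀ s : Set ℕ, sᶜ.Finite → s ∈ ω)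
    (ε : ℕ → ℝ) (hε : IsScale ε) (hεnt : NontrivialScale ω ε) :
    ∃ B : Subring (ℕ → ℂ), (B : Set (ℕ → ℂ)) = {z | limNorm ω ε z ≠ ⊤} ∧
      (∀ c : ℂ, (fun _ => c) ∈ B) ∧
      ∃ N : Ideal B, (N : Set B) = {z : B | limNorm ω ε (z : ℕ → ℂ) = 0} ∧
        N.IsMaximal ∧ IsField (B ⧸ N) ∧
        (∀ z w : B, Ideal.Quotient.mk N z = Ideal.Quotient.mk N w →
          limNorm ω ε (z : ℕ → ℂ) = limNorm ω ε (w : ℕ → ℂ)) ∧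
        (∀ z w : B, limNorm ω ε ((z : ℕ → ℂ) * (w : ℕ → ℂ)) =
          limNorm ω ε (z : ℕ → ℂ) * limNorm ω ε (w : ℕ → ℂ)) := by
  classical
  refine ⟨Bring ω ε hε, rfl, fun c => limNorm_const_ne_top ω ε hε c,
    Nideal ω ε hε, rfl, ?_, isField_quot ω ε hε, ?_, ?_⟩
  · exact Ideal.Quotient.maximal_of_isField _ (isField_quot ω ε hε)
  · intro z w h
    have hsub : z - w ∈ Nideal ω ε hε := (Ideal.Quotient.mk_eq_mk_iff_sub_mem z w).mp h
    rw [mem_Nideal] at hsub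
    have hcoe : ((z - w : Bring ω ε hε) : ℕ → ℂ) = (z : ℕ → ℂ) - (w : ℕ → ℂ) := rfl
    rw [hcoe] at hsub
    have key : ∀ u v : ℕ → ℂ, limNorm ω ε (u - v) = 0 →
        limNorm ω ε u ≤ limNorm ω ε v := by
      intro u v huv
      calc limNorm ω ε u = limNorm ω ε ((u - v) + v) := by rw [sub_add_cancel]
        _ ≤ limNorm ω ε (u - v) + limNorm ω ε v := limNorm_add_le ω ε hε _ _
        _ = limNorm ω ε v := by rw [huv, zero_add]
    refine le_antisymm (key _ _ hsub) (key _ _ ?_)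
    have : (w : ℕ → ℂ) - (z : ℕ → ℂ) = -((z : ℕ → ℂ) - (w : ℕ → ℂ)) := by ring
    rw [this, limNorm_neg, hsub]
  · intro z w
    exact limNorm_mul ω ε hε _ _ (Or.inr w.2) (Or.inr z.2)
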